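/- Let $I_{12}, I_{23}, I_{31} \geq 0$ and let $s > 0$ satisfy $\cosh^2 s > \max(I_{12}-1, I_{23}-1, I_{31}-1)/2$. Define $l_i$ by $\cosh l_i = \cosh^2 s + I_{jk} \sinh^2 s$ for $\{i,j,k\} = \{1,2,3\}$ (with $l_i > 0$). Then $l_1, l_2, l_3$ satisfy the strict triangle inequalities. -/
import Mathlib
set_option maxHeartbeats 1000000

open Real in
lemma equal_radii_aux (I s la lb lc : ℝ) (hI : 0 ≤ I) (hs : 0 < s)
    (hbig : Real.cosh s ^ 2 > (I - 1) / 2)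
    (hla : 0 < la) (hlb : 0 < lb) (hlc : 0 < lc)
    (ca : Real.cosh s ^ 2 ≤ Real.cosh la) (cb : Real.cosh s ^ 2 ≤ Real.cosh lb)
    (cc : Real.cosh lc = Real.cosh s ^ 2 + I * Real.sinh s ^ 2) :
    lc < la + lb := by
  set C := Real.cosh s ^ 2 with hCdef
  have hcos : Real.cosh lc < Real.cosh (la + lb) := by
    rw [Real.cosh_add, cc]
    have h1 : 1 < Real.cosh s := by
      have := Real.one_lt_cosh.mpr hs.ne'
      linarith
    have hsa : 0 < Real.sinh la := Real.sinh_pos_iff.mpr hla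
    have hsb : 0 < Real.sinh lb := Real.sinh_pos_iff.mpr hlb
    have ea : Real.sinh la ^ 2 = Real.cosh la ^ 2 - 1 := by
      have := Real.cosh_sq la; linarith
    have eb : Real.sinh lb ^ 2 = Real.cosh lb ^ 2 - 1 := by
      have := Real.cosh_sq lb; linarith
    have es : Real.sinh s ^ 2 = C - 1 := by
      have := Real.cosh_sq s; simp [hCdef]; linarith
    rw [es]
    have hC : 1 < C := by nlinarith
    set k := Real.sqrt (C ^ 2 - 1) with hk
    have hk0 : 0 ≤ k := Real.sqrt_nonneg _
    have hk2 : k ^ 2 = C ^ 2 - 1 := Real.sq_sqrt (by nlinarith)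
    have hka : k ≤ Real.sinh la := by nlinarith [sq_nonneg (Real.sinh la - k)]
    have hkb : k ≤ Real.sinh lb := by nlinarith [sq_nonneg (Real.sinh lb - k)]
    have hprod : C ^ 2 - 1 ≤ Real.sinh la * Real.sinh lb := by
      nlinarith [mul_le_mul hka hkb hk0 hsa.le]
    have hAB : C ^ 2 ≤ Real.cosh la * Real.cosh lb := by
      rw [pow_two]
      exact mul_le_mul ca cb (by linarith) (by linarith)
    have key : C + I * (C - 1) < 2 * C ^ 2 - 1 := by
      nlinarith [mul_pos (show (0:ℝ) < C - 1 by linarith) (show (0:ℝ) < 2 * C + 1 - I by linarith)]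
    linarith
  have := Real.cosh_lt_cosh.mp hcos
  rwa [abs_of_pos hlc, abs_of_pos (by linarith : 0 < la + lb)] at this

theorem equal_radii_admissible
    (I12 I23 I31 s : ℝ)
    (hI12 : 0 ≤ I12) (hI23 : 0 ≤ I23) (hI31 : 0 ≤ I31)
    (hs : 0 < s)
    (hbig : Real.cosh s ^ 2 > max (max (I12 - 1) (I23 - 1)) (I31 - 1) / 2)
    (l1 l2 l3 : ℝ) (hl1 : 0 < l1) (hl2 : 0 < l2) (hl3 : 0 < l3)
    (c1 : Real.cosh l1 = Real.cosh s ^ 2 + I23 * Real.sinh s ^ 2)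
    (c2 : Real.cosh l2 = Real.cosh s ^ 2 + I31 * Real.sinh s ^ 2)
    (c3 : Real.cosh l3 = Real.cosh s ^ 2 + I12 * Real.sinh s ^ 2) :
    l1 < l2 + l3 ∧ l2 < l3 + l1 ∧ l3 < l1 + l2 := by
  have m1 : I23 - 1 ≤ max (max (I12 - 1) (I23 - 1)) (I31 - 1) := le_max_of_le_left (le_max_right _ _)
  have m2 : I31 - 1 ≤ max (max (I12 - 1) (I23 - 1)) (I31 - 1) := le_max_right _ _
  have m3 : I12 - 1 ≤ max (max (I12 - 1) (I23 - 1)) (I31 - 1) := le_max_of_le_left (le_max_left _ _)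
  have hs2 : 0 ≤ Real.sinh s ^ 2 := sq_nonneg _
  have ca1 : Real.cosh s ^ 2 ≤ Real.cosh l1 := by nlinarith
  have ca2 : Real.cosh s ^ 2 ≤ Real.cosh l2 := by nlinarith
  have ca3 : Real.cosh s ^ 2 ≤ Real.cosh l3 := by nlinarith
  exact ⟨equal_radii_aux I23 s l2 l3 l1 hI23 hs (by linarith) hl2 hl3 hl1 ca2 ca3 c1,
    equal_radii_aux I31 s l3 l1 l2 hI31 hs (by linarith) hl3 hl1 hl2 ca3 ca1 c2,
    equal_radii_aux I12 s l1 l2 l3 hI12 hs (by linarith) hl1 hl2 hl3 ca1 ca2 c3⟩
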